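/- The number of walks of length n on the nonnegative integers starting at 0, where from position k the allowed steps are to any of 0,1,...,k-1 or to k+1 (Motzkin walks via factorial rule), equals the Motzkin number M_n, whose generating function satisfies F = 1 + zF + z²F² , i.e. F(z) = (1 - z - √(1-2z-3z²))/(2z²). -/

import Mathlib

open PowerSeries

def rr : ℕ → ℤ
  | 0 => 1
  | 1 => 0
  | n + 2 => (∑ i : Fin (n+2), rr i * rr (n+1-i)) + (∑ i : Fin (n+1), rr i * rr (n-i)) - rr (n+1)

theorem rr_add_two (n : ℕ) : rr (n+2) =
    (∑ i : Fin (n+2), rr i * rr (n+1-i)) + (∑ i : Fin (n+1), rr i * rr (n-i)) - rr (n+1) := by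
  rw [rr]

noncomputable def Rq : PowerSeries ℚ := PowerSeries.mk fun n => (rr n : ℚ)

lemma coeff_Rq (n : ℕ) : coeff n Rq = (rr n : ℚ) := coeff_mk n _

lemma coeff_Rq_sq (m : ℕ) :
    coeff m (Rq^2) = ((∑ i : Fin (m+1), rr i * rr (m - i) : ℤ) : ℚ) := by
  rw [pow_two, coeff_mul, Finset.Nat.sum_antidiagonal_eq_sum_range_succ_mk, Finset.sum_range]
  push_cast
  simp [coeff_Rq]

lemma Req : Rq + X*Rq = 1 + X*Rq^2 + X^2*Rq^2 := by
  ext n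
  match n with
  | 0 => simp [coeff_zero_eq_constantCoeff, Rq, rr, constantCoeff_mk]
  | 1 =>
      simp only [map_add, coeff_succ_X_mul, coeff_Rq, coeff_one]
      rw [show (X:ℚ⟦X⟧)^2*Rq^2 = X*(X*Rq^2) by ring, coeff_succ_X_mul]
      have h1 : coeff 0 (X*Rq^2) = 0 := by
        rw [show (X:ℚ⟦X⟧)*Rq^2 = X^1*Rq^2 by ring, coeff_X_pow_mul']
        simp
      rw [h1, coeff_Rq_sq]
      norm_num [rr]
  | (n+2) =>
      simp only [map_add, coeff_succ_X_mul, coeff_Rq, coeff_one]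
      rw [show (X:ℚ⟦X⟧)^2*Rq^2 = X*(X*Rq^2) by ring, coeff_succ_X_mul, coeff_Rq_sq, coeff_succ_X_mul, coeff_Rq_sq, rr_add_two]
      push_cast
      ring

noncomputable def qq (n k : ℕ) : ℚ := coeff n (X^k * Rq^(k+1))

lemma qq_lt {n k : ℕ} (h : n < k) : qq n k = 0 := by
  rw [qq, coeff_X_pow_mul', if_neg (by omega)]

lemma qq_diag (n : ℕ) : qq n n = 1 := by
  rw [qq, coeff_X_pow_mul', if_pos le_rfl]
  simp [coeff_zero_eq_constantCoeff, Rq, constantCoeff_mk, rr]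

lemma qq_zero (k : ℕ) : qq 0 k = if k = 0 then 1 else 0 := by
  rcases k with _ | k
  · rw [if_pos rfl]; exact qq_diag 0
  · rw [if_neg (by omega)]; exact qq_lt (by omega)

lemma serk (k : ℕ) :
    X^(k+1) * Rq^(k+2) + X * (X^(k+1) * Rq^(k+2)) =
      X^(k+2) * Rq^(k+3) + X * (X^k * Rq^(k+1)) + X * (X^(k+2) * Rq^(k+3)) := by
  linear_combination (X^(k+1) * Rq^(k+1)) * Req

lemma qq_local (n k : ℕ) :
    qq (n+1) k + qq n k = qq (n+1) (k+1) + (if 1 ≤ k then qq n (k-1) else 0) + qq n (k+1) := by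
  rcases k with _ | k
  · rw [if_neg (by omega)]
    have h := congrArg (coeff (n+1)) Req
    simp only [map_add, coeff_succ_X_mul, coeff_one, if_neg (Nat.succ_ne_zero n)] at h
    have h2 : coeff (n+1) ((X:ℚ⟦X⟧)^2*Rq^2) = coeff n (X*Rq^2) := by
      rw [show (X:ℚ⟦X⟧)^2*Rq^2 = X*(X*Rq^2) by ring, coeff_succ_X_mul]
    rw [h2] at h
    simpa [qq] using h
  · rw [if_pos (by omega)]
    have h := congrArg (coeff (n+1)) (serk k)
    simp only [map_add, coeff_succ_X_mul] at h
    simpa [qq, show k+1-1 = k from rfl, show k+1+1 = k+2 from rfl,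
      show k+2+1 = k+3 from rfl] using h

/-- walks on ℕ starting at 0 where from position k one may step to any of
0,...,k-1 or to k+1. Here c n k is the number of such walks of length n ending at k,
and f n the total number of walks of length n. The generating function F = ∑ f_n z^n
satisfies F = 1 + zF + z²F², i.e. f_n is the Motzkin number M_n. -/
theorem stmt_5 (c : ℕ → ℕ → ℕ)
    (h0 : ∀ k, c 0 k = if k = 0 then 1 else 0)
    (hbound : ∀ n k, n < k → c n k = 0)
    (hstep : ∀ n k, c (n + 1) k =
      (if 1 ≤ k then c n (k - 1) else 0) + ∑ j ∈ Finset.Ioc k n, c n j)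
    (f : ℕ → ℕ) (hf : ∀ n, f n = ∑ k ∈ Finset.range (n + 1), c n k)
    (F : PowerSeries ℚ) (hF : F = mk fun n => (f n : ℚ)) :
    F = 1 + X * F + X ^ 2 * F ^ 2 := by
  -- diagonal values
  have cnn : ∀ n, c n n = 1 := by
    intro n
    induction n with
    | zero => simp [h0]
    | succ n ih =>
        rw [hstep, if_pos (by omega), Finset.Ioc_eq_empty (by omega)]
        simpa using ih
  -- tail-sum splitting
  have Tsplit : ∀ n k, (∑ j ∈ Finset.Ioc k n, c n j) =
      c n (k+1) + ∑ j ∈ Finset.Ioc (k+1) n, c n j := by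
    intro n k
    by_cases h : k < n
    · rw [← Finset.sum_Ioc_consecutive _ (Nat.le_succ k) (by omega : k + 1 ≤ n),
        Nat.Ioc_succ_singleton, Finset.sum_singleton]
    · rw [Finset.Ioc_eq_empty (by omega), Finset.Ioc_eq_empty (by omega),
        hbound n (k+1) (by omega)]
      simp
  -- local three-term recurrence
  have clocal : ∀ n k, c (n+1) k + c n k =
      c (n+1) (k+1) + (if 1 ≤ k then c n (k-1) else 0) + c n (k+1) := by
    intro n k
    rw [hstep n k, hstep n (k+1), if_pos (by omega : 1 ≤ k+1),
      show k+1-1 = k from rfl, Tsplit n k]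
    ring
  -- c coincides with qq
  have key : ∀ n k, (c n k : ℚ) = qq n k := by
    intro n
    induction n with
    | zero =>
        intro k
        rw [h0, qq_zero]
        split <;> norm_num
    | succ n ih =>
        have aux : ∀ m k, n + 1 ≤ k + m → (c (n+1) k : ℚ) = qq (n+1) k := by
          intro m
          induction m with
          | zero =>
              intro k hk
              rcases Nat.lt_or_ge (n+1) k with h | h
              · rw [hbound _ _ h, qq_lt h]; norm_num
              · have : k = n + 1 := by omega
                subst this
                rw [cnn, qq_diag]; norm_num
          | succ m ihm =>
              intro k hk
              by_cases h : n + 1 ≤ k + m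
              · exact ihm k h
              · have hc := congrArg (fun t : ℕ => (t : ℚ)) (clocal n k)
                push_cast at hc
                have hq := qq_local n k
                have h1 := ihm (k+1) (by omega)
                have h2 := ih k
                have h3 := ih (k+1)
                by_cases hk1 : 1 ≤ k
                · have h4 := ih (k-1)
                  rw [if_pos hk1] at hc hq
                  linarith
                · rw [if_neg hk1] at hc hq
                  linarith
        intro k
        exact aux (n+1) k (by omega)
  -- coefficients of F equal those of partial sums of the column series
  have hfq : ∀ p N, p < N →
      coeff p F = coeff p (∑ k ∈ Finset.range N, X^k * Rq^(k+1)) := by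
    intro p N h
    rw [hF, coeff_mk, hf, map_sum]
    push_cast
    calc ∑ k ∈ Finset.range (p+1), (c p k : ℚ)
        = ∑ k ∈ Finset.range (p+1), qq p k :=
          Finset.sum_congr rfl fun k _ => key p k
      _ = ∑ k ∈ Finset.range N, qq p k := by
          refine Finset.sum_subset (Finset.range_subset_range.2 (by omega)) ?_
          intro k _ hk
          exact qq_lt (by simp at hk ⊢; omega)
      _ = _ := rfl
  -- the functional equation F (1 - X Rq) = Rq
  have FR : F * (1 - X*Rq) = Rq := by
    ext n
    have hstep1 : coeff n (F * (1 - X*Rq)) =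
        coeff n ((∑ k ∈ Finset.range (n+1), X^k * Rq^(k+1)) * (1 - X*Rq)) := by
      rw [coeff_mul, coeff_mul]
      refine Finset.sum_congr rfl fun pq hpq => ?_
      have hp : pq.1 ≤ n := by
        have := Finset.HasAntidiagonal.mem_antidiagonal.mp hpq
        omega
      rw [hfq pq.1 (n+1) (by omega)]
    rw [hstep1]
    have hgeom : (∑ k ∈ Finset.range (n+1), X^k * Rq^(k+1)) * (1 - X*Rq)
        = Rq - X^(n+1) * Rq^(n+2) := by
      have hS : (∑ k ∈ Finset.range (n+1), X^k * Rq^(k+1))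
          = Rq * ∑ k ∈ Finset.range (n+1), (X*Rq)^k := by
        rw [Finset.mul_sum]
        exact Finset.sum_congr rfl fun k _ => by ring
      have hg := geom_sum_mul (X*Rq : ℚ⟦X⟧) (n+1)
      rw [hS, mul_assoc]
      linear_combination -Rq * hg
    rw [hgeom, map_sub]
    have hz : coeff n ((X:ℚ⟦X⟧)^(n+1) * Rq^(n+2)) = 0 := by
      rw [coeff_X_pow_mul', if_neg (by omega)]
    rw [hz, sub_zero]
  -- conclude via unit cancellation
  have hu : IsUnit (1 - X*Rq : ℚ⟦X⟧) := by
    rw [PowerSeries.isUnit_iff_constantCoeff]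
    simp
  have hne : ((1 - X*Rq : ℚ⟦X⟧))^2 ≠ 0 := pow_ne_zero _ hu.ne_zero
  refine mul_right_cancel₀ hne ?_
  linear_combination ((1-X)*(1-X*Rq) - X^2*(Rq + F*(1-X*Rq))) * FR + Req
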